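/- arXiv:2601.02803 — 8 statements merged into one kernel-verified Lean document; each statement's English description precedes it below -/
import Mathlib

section
/- The multiset extension of an ordering pair is itself an ordering pair: if (≻, ⪰) is an ordering pair on a set A (≻ well-founded, transitive, irreflexive; ⪰ reflexive, transitive; ≻ ⊆ ⪰; ≻·⪰ ⊆ ≻ and ⪰·≻ ⊆ ≻), then the relations (≻_mul, ⪰_mul) on size-2 multisets over A defined by: {a₁,a₂} ⪰_mul {b₁,b₂} iff either some aᵢ satisfies aᵢ ≻ b₁ and aᵢ ≻ b₂, or there is a pairing with a ⪰ b componentwise; and {a₁,a₂} ≻_mul {b₁,b₂} iff either some aᵢ satisfies aᵢ ≻ b₁ and aᵢ ≻ b₂, or there exist i,j with aᵢ ≻ b_j and a_{3-i} ⪰ b_{3-j}; form an ordering pair on size-2 multisets. -/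
variable {A : Type*}

/-- Strict part of the size-2 multiset extension of an ordering pair.
Ordered pairs represent unordered size-2 multisets; the definition is
invariant under swapping the components of either side. -/
def succMul (succ succeq : A → A → Prop) (p q : A × A) : Prop :=
  (succ p.1 q.1 ∧ succ p.1 q.2) ∨ (succ p.2 q.1 ∧ succ p.2 q.2) ∨
  (succ p.1 q.1 ∧ succeq p.2 q.2) ∨ (succ p.1 q.2 ∧ succeq p.2 q.1) ∨
  (succ p.2 q.1 ∧ succeq p.1 q.2) ∨ (succ p.2 q.2 ∧ succeq p.1 q.1)

/-- Weak part of the size-2 multiset extension of an ordering pair. -/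
def succeqMul (succ succeq : A → A → Prop) (p q : A × A) : Prop :=
  (succ p.1 q.1 ∧ succ p.1 q.2) ∨ (succ p.2 q.1 ∧ succ p.2 q.2) ∨
  (succeq p.1 q.1 ∧ succeq p.2 q.2) ∨ (succeq p.1 q.2 ∧ succeq p.2 q.1)

/-- The multiset extension of an ordering pair is itself an ordering pair
on size-2 multisets. -/
theorem multiset_extension_is_ordering_pair
    (succ succeq : A → A → Prop)
    (hwf : WellFounded (fun a b => succ b a))
    (htrans : ∀ a b c, succ a b → succ b c → succ a c)
    (hirr : ∀ a, ¬ succ a a)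
    (hrefl : ∀ a, succeq a a)
    (heqtrans : ∀ a b c, succeq a b → succeq b c → succeq a c)
    (hsub : ∀ a b, succ a b → succeq a b)
    (hcompat₁ : ∀ a b c, succ a b → succeq b c → succ a c)
    (hcompat₂ : ∀ a b c, succeq a b → succ b c → succ a c) :
    WellFounded (fun p q => succMul succ succeq q p) ∧
    (∀ p q r, succMul succ succeq p q → succMul succ succeq q r → succMul succ succeq p r) ∧
    (∀ p, ¬ succMul succ succeq p p) ∧
    (∀ p, succeqMul succ succeq p p) ∧
    (∀ p q r, succeqMul succ succeq p q → succeqMul succ succeq q r →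
        succeqMul succ succeq p r) ∧
    (∀ p q, succMul succ succeq p q → succeqMul succ succeq p q) ∧
    (∀ p q r, succMul succ succeq p q → succeqMul succ succeq q r → succMul succ succeq p r) ∧
    (∀ p q r, succeqMul succ succeq p q → succMul succ succeq q r → succMul succ succeq p r) := by
  classical
  have hI : IsWellFounded A (fun a b => succ b a) := ⟨hwf⟩
  set ρ : A → Ordinal := IsWellFounded.rank (fun a b => succ b a) with hρdef
  have hs : ∀ x y, succ x y → ρ y < ρ x := fun x y h => IsWellFounded.rank_lt_of_rel h
  have he : ∀ x y, succeq x y → ρ y ≤ ρ x := by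
    intro x y h
    rw [hρdef, IsWellFounded.rank_eq]
    apply Ordinal.iSup_le
    rintro ⟨z, hz⟩
    exact Order.succ_le_of_lt (hs x z (hcompat₂ x y z h hz))
  have hdom : ∀ x y u v : Ordinal, x < u → y < u →
      Prod.Lex (· < ·) (· < ·) (max x y, min x y) (max u v, min u v) :=
    fun x y u v hx hy =>
      Prod.Lex.left _ _ ((max_lt hx hy).trans_le (le_max_left u v))
  have hlex : ∀ x y u v : Ordinal, x < u → y ≤ v →
      Prod.Lex (· < ·) (· < ·) (max x y, min x y) (max u v, min u v) := by
    intro x y u v hx hy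
    rcases lt_or_eq_of_le (max_le_max hx.le hy) with h | h
    · exact Prod.Lex.left _ _ h
    · have hxm : x < max x y := by
        have h3 : x < max u v := hx.trans_le (le_max_left u v)
        rwa [← h] at h3
      have hy2 : max x y = y := by
        rcases max_choice x y with h2 | h2
        · rw [h2] at hxm; exact absurd hxm (lt_irrefl x)
        · exact h2
      have hv : v = y := le_antisymm (by rw [← hy2, h]; exact le_max_right u v) hy
      have hu : u ≤ v := by
        have h4 : u ≤ max u v := le_max_left u v
        rwa [← h, hy2, ← hv] at h4
      rw [h]
      refine Prod.Lex.right _ ?_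
      rw [min_eq_left hu]
      exact (min_le_left x y).trans_lt hx
  have key : ∀ p q : A × A, succMul succ succeq q p →
      Prod.Lex (· < ·) (· < ·) (max (ρ p.1) (ρ p.2), min (ρ p.1) (ρ p.2))
        (max (ρ q.1) (ρ q.2), min (ρ q.1) (ρ q.2)) := by
    intro p q h
    rcases h with ⟨h1, h2⟩ | ⟨h1, h2⟩ | ⟨h1, h2⟩ | ⟨h1, h2⟩ | ⟨h1, h2⟩ | ⟨h1, h2⟩
    · exact hdom _ _ _ _ (hs _ _ h1) (hs _ _ h2)
    · rw [max_comm (ρ q.1), min_comm (ρ q.1)]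
      exact hdom _ _ _ _ (hs _ _ h1) (hs _ _ h2)
    · exact hlex _ _ _ _ (hs _ _ h1) (he _ _ h2)
    · rw [max_comm (ρ p.1), min_comm (ρ p.1)]
      exact hlex _ _ _ _ (hs _ _ h1) (he _ _ h2)
    · rw [max_comm (ρ q.1), min_comm (ρ q.1)]
      exact hlex _ _ _ _ (hs _ _ h1) (he _ _ h2)
    · rw [max_comm (ρ p.1), min_comm (ρ p.1), max_comm (ρ q.1), min_comm (ρ q.1)]
      exact hlex _ _ _ _ (hs _ _ h1) (he _ _ h2)
  have hwfmul : WellFounded (fun p q => succMul succ succeq q p) := by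
    have hlexwf : WellFounded (Prod.Lex ((· < ·) : Ordinal → Ordinal → Prop) (· < ·)) :=
      (Ordinal.lt_wf).prod_lex Ordinal.lt_wf
    exact Subrelation.wf (fun {p q} h => key p q h)
      (InvImage.wf (fun p : A × A => (max (ρ p.1) (ρ p.2), min (ρ p.1) (ρ p.2))) hlexwf)
  refine ⟨hwfmul, ?_, ?_, ?_, ?_, ?_, ?_, ?_⟩
  · rintro ⟨a1, a2⟩ ⟨b1, b2⟩ ⟨c1, c2⟩ hpq hqr
    simp only [succMul] at hpq hqr ⊢
    rcases hpq with ⟨h1, h2⟩ | ⟨h1, h2⟩ | ⟨h1, h2⟩ | ⟨h1, h2⟩ | ⟨h1, h2⟩ | ⟨h1, h2⟩ <;>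
      rcases hqr with ⟨k1, k2⟩ | ⟨k1, k2⟩ | ⟨k1, k2⟩ | ⟨k1, k2⟩ | ⟨k1, k2⟩ | ⟨k1, k2⟩
    · exact Or.inl ⟨(htrans _ _ _ h1 k1), (htrans _ _ _ h1 k2)⟩
    · exact Or.inl ⟨(htrans _ _ _ h2 k1), (htrans _ _ _ h2 k2)⟩
    · exact Or.inl ⟨(htrans _ _ _ h1 k1), (hcompat₁ _ _ _ h2 k2)⟩
    · exact Or.inl ⟨(hcompat₁ _ _ _ h2 k2), (htrans _ _ _ h1 k1)⟩
    · exact Or.inl ⟨(htrans _ _ _ h2 k1), (hcompat₁ _ _ _ h1 k2)⟩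
    · exact Or.inl ⟨(hcompat₁ _ _ _ h1 k2), (htrans _ _ _ h2 k1)⟩
    · exact Or.inr (Or.inl ⟨(htrans _ _ _ h1 k1), (htrans _ _ _ h1 k2)⟩)
    · exact Or.inr (Or.inl ⟨(htrans _ _ _ h2 k1), (htrans _ _ _ h2 k2)⟩)
    · exact Or.inr (Or.inl ⟨(htrans _ _ _ h1 k1), (hcompat₁ _ _ _ h2 k2)⟩)
    · exact Or.inr (Or.inl ⟨(hcompat₁ _ _ _ h2 k2), (htrans _ _ _ h1 k1)⟩)
    · exact Or.inr (Or.inl ⟨(htrans _ _ _ h2 k1), (hcompat₁ _ _ _ h1 k2)⟩)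
    · exact Or.inr (Or.inl ⟨(hcompat₁ _ _ _ h1 k2), (htrans _ _ _ h2 k1)⟩)
    · exact Or.inl ⟨(htrans _ _ _ h1 k1), (htrans _ _ _ h1 k2)⟩
    · exact Or.inr (Or.inl ⟨(hcompat₂ _ _ _ h2 k1), (hcompat₂ _ _ _ h2 k2)⟩)
    · exact Or.inr (Or.inr (Or.inl ⟨(htrans _ _ _ h1 k1), (heqtrans _ _ _ h2 k2)⟩))
    · exact Or.inr (Or.inr (Or.inr (Or.inl ⟨(htrans _ _ _ h1 k1), (heqtrans _ _ _ h2 k2)⟩)))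
    · exact Or.inr (Or.inr (Or.inr (Or.inl ⟨(hcompat₁ _ _ _ h1 k2), (hsub _ _ (hcompat₂ _ _ _ h2 k1))⟩)))
    · exact Or.inr (Or.inr (Or.inl ⟨(hcompat₁ _ _ _ h1 k2), (hsub _ _ (hcompat₂ _ _ _ h2 k1))⟩))
    · exact Or.inr (Or.inl ⟨(hcompat₂ _ _ _ h2 k1), (hcompat₂ _ _ _ h2 k2)⟩)
    · exact Or.inl ⟨(htrans _ _ _ h1 k1), (htrans _ _ _ h1 k2)⟩
    · exact Or.inr (Or.inr (Or.inr (Or.inl ⟨(hcompat₁ _ _ _ h1 k2), (hsub _ _ (hcompat₂ _ _ _ h2 k1))⟩)))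
    · exact Or.inr (Or.inr (Or.inl ⟨(hcompat₁ _ _ _ h1 k2), (hsub _ _ (hcompat₂ _ _ _ h2 k1))⟩))
    · exact Or.inr (Or.inr (Or.inl ⟨(htrans _ _ _ h1 k1), (heqtrans _ _ _ h2 k2)⟩))
    · exact Or.inr (Or.inr (Or.inr (Or.inl ⟨(htrans _ _ _ h1 k1), (heqtrans _ _ _ h2 k2)⟩)))
    · exact Or.inr (Or.inl ⟨(htrans _ _ _ h1 k1), (htrans _ _ _ h1 k2)⟩)
    · exact Or.inl ⟨(hcompat₂ _ _ _ h2 k1), (hcompat₂ _ _ _ h2 k2)⟩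
    · exact Or.inr (Or.inr (Or.inr (Or.inr (Or.inl ⟨(htrans _ _ _ h1 k1), (heqtrans _ _ _ h2 k2)⟩))))
    · exact Or.inr (Or.inr (Or.inr (Or.inr (Or.inr (⟨(htrans _ _ _ h1 k1), (heqtrans _ _ _ h2 k2)⟩)))))
    · exact Or.inr (Or.inr (Or.inl ⟨(hcompat₂ _ _ _ h2 k1), (hsub _ _ (hcompat₁ _ _ _ h1 k2))⟩))
    · exact Or.inr (Or.inr (Or.inr (Or.inl ⟨(hcompat₂ _ _ _ h2 k1), (hsub _ _ (hcompat₁ _ _ _ h1 k2))⟩)))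
    · exact Or.inl ⟨(hcompat₂ _ _ _ h2 k1), (hcompat₂ _ _ _ h2 k2)⟩
    · exact Or.inr (Or.inl ⟨(htrans _ _ _ h1 k1), (htrans _ _ _ h1 k2)⟩)
    · exact Or.inr (Or.inr (Or.inl ⟨(hcompat₂ _ _ _ h2 k1), (hsub _ _ (hcompat₁ _ _ _ h1 k2))⟩))
    · exact Or.inr (Or.inr (Or.inr (Or.inl ⟨(hcompat₂ _ _ _ h2 k1), (hsub _ _ (hcompat₁ _ _ _ h1 k2))⟩)))
    · exact Or.inr (Or.inr (Or.inr (Or.inr (Or.inl ⟨(htrans _ _ _ h1 k1), (heqtrans _ _ _ h2 k2)⟩))))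
    · exact Or.inr (Or.inr (Or.inr (Or.inr (Or.inr (⟨(htrans _ _ _ h1 k1), (heqtrans _ _ _ h2 k2)⟩)))))
  · rintro ⟨a1, a2⟩ h
    simp only [succMul] at h
    rcases h with ⟨h1, h2⟩ | ⟨h1, h2⟩ | ⟨h1, h2⟩ | ⟨h1, h2⟩ | ⟨h1, h2⟩ | ⟨h1, h2⟩ <;>
      first
      | exact hirr _ h1
      | exact hirr _ h2
      | exact hirr _ (hcompat₁ _ _ _ h1 h2)
  · intro p
    exact Or.inr (Or.inr (Or.inl ⟨hrefl _, hrefl _⟩))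
  · rintro ⟨a1, a2⟩ ⟨b1, b2⟩ ⟨c1, c2⟩ hpq hqr
    simp only [succeqMul] at hpq hqr ⊢
    rcases hpq with ⟨h1, h2⟩ | ⟨h1, h2⟩ | ⟨h1, h2⟩ | ⟨h1, h2⟩ <;>
      rcases hqr with ⟨k1, k2⟩ | ⟨k1, k2⟩ | ⟨k1, k2⟩ | ⟨k1, k2⟩
    · exact Or.inl ⟨(htrans _ _ _ h1 k1), (htrans _ _ _ h1 k2)⟩
    · exact Or.inl ⟨(htrans _ _ _ h2 k1), (htrans _ _ _ h2 k2)⟩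
    · exact Or.inl ⟨(hcompat₁ _ _ _ h1 k1), (hcompat₁ _ _ _ h2 k2)⟩
    · exact Or.inl ⟨(hcompat₁ _ _ _ h2 k2), (hcompat₁ _ _ _ h1 k1)⟩
    · exact Or.inr (Or.inl ⟨(htrans _ _ _ h1 k1), (htrans _ _ _ h1 k2)⟩)
    · exact Or.inr (Or.inl ⟨(htrans _ _ _ h2 k1), (htrans _ _ _ h2 k2)⟩)
    · exact Or.inr (Or.inl ⟨(hcompat₁ _ _ _ h1 k1), (hcompat₁ _ _ _ h2 k2)⟩)
    · exact Or.inr (Or.inl ⟨(hcompat₁ _ _ _ h2 k2), (hcompat₁ _ _ _ h1 k1)⟩)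
    · exact Or.inl ⟨(hcompat₂ _ _ _ h1 k1), (hcompat₂ _ _ _ h1 k2)⟩
    · exact Or.inr (Or.inl ⟨(hcompat₂ _ _ _ h2 k1), (hcompat₂ _ _ _ h2 k2)⟩)
    · exact Or.inr (Or.inr (Or.inl ⟨(heqtrans _ _ _ h1 k1), (heqtrans _ _ _ h2 k2)⟩))
    · exact Or.inr (Or.inr (Or.inr (⟨(heqtrans _ _ _ h1 k1), (heqtrans _ _ _ h2 k2)⟩)))
    · exact Or.inr (Or.inl ⟨(hcompat₂ _ _ _ h2 k1), (hcompat₂ _ _ _ h2 k2)⟩)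
    · exact Or.inl ⟨(hcompat₂ _ _ _ h1 k1), (hcompat₂ _ _ _ h1 k2)⟩
    · exact Or.inr (Or.inr (Or.inr (⟨(heqtrans _ _ _ h1 k2), (heqtrans _ _ _ h2 k1)⟩)))
    · exact Or.inr (Or.inr (Or.inl ⟨(heqtrans _ _ _ h1 k2), (heqtrans _ _ _ h2 k1)⟩))
  · rintro ⟨a1, a2⟩ ⟨b1, b2⟩ h
    simp only [succMul] at h
    simp only [succeqMul]
    rcases h with ⟨h1, h2⟩ | ⟨h1, h2⟩ | ⟨h1, h2⟩ | ⟨h1, h2⟩ | ⟨h1, h2⟩ | ⟨h1, h2⟩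
    · exact Or.inl ⟨h1, h2⟩
    · exact Or.inr (Or.inl ⟨h1, h2⟩)
    · exact Or.inr (Or.inr (Or.inl ⟨hsub _ _ h1, h2⟩))
    · exact Or.inr (Or.inr (Or.inr ⟨hsub _ _ h1, h2⟩))
    · exact Or.inr (Or.inr (Or.inr ⟨h2, hsub _ _ h1⟩))
    · exact Or.inr (Or.inr (Or.inl ⟨h2, hsub _ _ h1⟩))
  · rintro ⟨a1, a2⟩ ⟨b1, b2⟩ ⟨c1, c2⟩ hpq hqr
    simp only [succMul] at hpq ⊢
    simp only [succeqMul] at hqr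
    rcases hpq with ⟨h1, h2⟩ | ⟨h1, h2⟩ | ⟨h1, h2⟩ | ⟨h1, h2⟩ | ⟨h1, h2⟩ | ⟨h1, h2⟩ <;>
      rcases hqr with ⟨k1, k2⟩ | ⟨k1, k2⟩ | ⟨k1, k2⟩ | ⟨k1, k2⟩
    · exact Or.inl ⟨(htrans _ _ _ h1 k1), (htrans _ _ _ h1 k2)⟩
    · exact Or.inl ⟨(htrans _ _ _ h2 k1), (htrans _ _ _ h2 k2)⟩
    · exact Or.inl ⟨(hcompat₁ _ _ _ h1 k1), (hcompat₁ _ _ _ h2 k2)⟩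
    · exact Or.inl ⟨(hcompat₁ _ _ _ h2 k2), (hcompat₁ _ _ _ h1 k1)⟩
    · exact Or.inr (Or.inl ⟨(htrans _ _ _ h1 k1), (htrans _ _ _ h1 k2)⟩)
    · exact Or.inr (Or.inl ⟨(htrans _ _ _ h2 k1), (htrans _ _ _ h2 k2)⟩)
    · exact Or.inr (Or.inl ⟨(hcompat₁ _ _ _ h1 k1), (hcompat₁ _ _ _ h2 k2)⟩)
    · exact Or.inr (Or.inl ⟨(hcompat₁ _ _ _ h2 k2), (hcompat₁ _ _ _ h1 k1)⟩)
    · exact Or.inl ⟨(htrans _ _ _ h1 k1), (htrans _ _ _ h1 k2)⟩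
    · exact Or.inr (Or.inl ⟨(hcompat₂ _ _ _ h2 k1), (hcompat₂ _ _ _ h2 k2)⟩)
    · exact Or.inr (Or.inr (Or.inl ⟨(hcompat₁ _ _ _ h1 k1), (heqtrans _ _ _ h2 k2)⟩))
    · exact Or.inr (Or.inr (Or.inr (Or.inl ⟨(hcompat₁ _ _ _ h1 k1), (heqtrans _ _ _ h2 k2)⟩)))
    · exact Or.inr (Or.inl ⟨(hcompat₂ _ _ _ h2 k1), (hcompat₂ _ _ _ h2 k2)⟩)
    · exact Or.inl ⟨(htrans _ _ _ h1 k1), (htrans _ _ _ h1 k2)⟩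
    · exact Or.inr (Or.inr (Or.inr (Or.inl ⟨(hcompat₁ _ _ _ h1 k2), (heqtrans _ _ _ h2 k1)⟩)))
    · exact Or.inr (Or.inr (Or.inl ⟨(hcompat₁ _ _ _ h1 k2), (heqtrans _ _ _ h2 k1)⟩))
    · exact Or.inr (Or.inl ⟨(htrans _ _ _ h1 k1), (htrans _ _ _ h1 k2)⟩)
    · exact Or.inl ⟨(hcompat₂ _ _ _ h2 k1), (hcompat₂ _ _ _ h2 k2)⟩
    · exact Or.inr (Or.inr (Or.inr (Or.inr (Or.inl ⟨(hcompat₁ _ _ _ h1 k1), (heqtrans _ _ _ h2 k2)⟩))))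
    · exact Or.inr (Or.inr (Or.inr (Or.inr (Or.inr (⟨(hcompat₁ _ _ _ h1 k1), (heqtrans _ _ _ h2 k2)⟩)))))
    · exact Or.inl ⟨(hcompat₂ _ _ _ h2 k1), (hcompat₂ _ _ _ h2 k2)⟩
    · exact Or.inr (Or.inl ⟨(htrans _ _ _ h1 k1), (htrans _ _ _ h1 k2)⟩)
    · exact Or.inr (Or.inr (Or.inr (Or.inr (Or.inr (⟨(hcompat₁ _ _ _ h1 k2), (heqtrans _ _ _ h2 k1)⟩)))))
    · exact Or.inr (Or.inr (Or.inr (Or.inr (Or.inl ⟨(hcompat₁ _ _ _ h1 k2), (heqtrans _ _ _ h2 k1)⟩))))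
  · rintro ⟨a1, a2⟩ ⟨b1, b2⟩ ⟨c1, c2⟩ hpq hqr
    simp only [succeqMul] at hpq
    simp only [succMul] at hqr ⊢
    rcases hpq with ⟨h1, h2⟩ | ⟨h1, h2⟩ | ⟨h1, h2⟩ | ⟨h1, h2⟩ <;>
      rcases hqr with ⟨k1, k2⟩ | ⟨k1, k2⟩ | ⟨k1, k2⟩ | ⟨k1, k2⟩ | ⟨k1, k2⟩ | ⟨k1, k2⟩
    · exact Or.inl ⟨(htrans _ _ _ h1 k1), (htrans _ _ _ h1 k2)⟩
    · exact Or.inl ⟨(htrans _ _ _ h2 k1), (htrans _ _ _ h2 k2)⟩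
    · exact Or.inl ⟨(htrans _ _ _ h1 k1), (hcompat₁ _ _ _ h2 k2)⟩
    · exact Or.inl ⟨(hcompat₁ _ _ _ h2 k2), (htrans _ _ _ h1 k1)⟩
    · exact Or.inl ⟨(htrans _ _ _ h2 k1), (hcompat₁ _ _ _ h1 k2)⟩
    · exact Or.inl ⟨(hcompat₁ _ _ _ h1 k2), (htrans _ _ _ h2 k1)⟩
    · exact Or.inr (Or.inl ⟨(htrans _ _ _ h1 k1), (htrans _ _ _ h1 k2)⟩)
    · exact Or.inr (Or.inl ⟨(htrans _ _ _ h2 k1), (htrans _ _ _ h2 k2)⟩)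
    · exact Or.inr (Or.inl ⟨(htrans _ _ _ h1 k1), (hcompat₁ _ _ _ h2 k2)⟩)
    · exact Or.inr (Or.inl ⟨(hcompat₁ _ _ _ h2 k2), (htrans _ _ _ h1 k1)⟩)
    · exact Or.inr (Or.inl ⟨(htrans _ _ _ h2 k1), (hcompat₁ _ _ _ h1 k2)⟩)
    · exact Or.inr (Or.inl ⟨(hcompat₁ _ _ _ h1 k2), (htrans _ _ _ h2 k1)⟩)
    · exact Or.inl ⟨(hcompat₂ _ _ _ h1 k1), (hcompat₂ _ _ _ h1 k2)⟩
    · exact Or.inr (Or.inl ⟨(hcompat₂ _ _ _ h2 k1), (hcompat₂ _ _ _ h2 k2)⟩)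
    · exact Or.inr (Or.inr (Or.inl ⟨(hcompat₂ _ _ _ h1 k1), (heqtrans _ _ _ h2 k2)⟩))
    · exact Or.inr (Or.inr (Or.inr (Or.inl ⟨(hcompat₂ _ _ _ h1 k1), (heqtrans _ _ _ h2 k2)⟩)))
    · exact Or.inr (Or.inr (Or.inr (Or.inr (Or.inl ⟨(hcompat₂ _ _ _ h2 k1), (heqtrans _ _ _ h1 k2)⟩))))
    · exact Or.inr (Or.inr (Or.inr (Or.inr (Or.inr (⟨(hcompat₂ _ _ _ h2 k1), (heqtrans _ _ _ h1 k2)⟩)))))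
    · exact Or.inr (Or.inl ⟨(hcompat₂ _ _ _ h2 k1), (hcompat₂ _ _ _ h2 k2)⟩)
    · exact Or.inl ⟨(hcompat₂ _ _ _ h1 k1), (hcompat₂ _ _ _ h1 k2)⟩
    · exact Or.inr (Or.inr (Or.inr (Or.inr (Or.inl ⟨(hcompat₂ _ _ _ h2 k1), (heqtrans _ _ _ h1 k2)⟩))))
    · exact Or.inr (Or.inr (Or.inr (Or.inr (Or.inr (⟨(hcompat₂ _ _ _ h2 k1), (heqtrans _ _ _ h1 k2)⟩)))))
    · exact Or.inr (Or.inr (Or.inl ⟨(hcompat₂ _ _ _ h1 k1), (heqtrans _ _ _ h2 k2)⟩))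
    · exact Or.inr (Or.inr (Or.inr (Or.inl ⟨(hcompat₂ _ _ _ h1 k1), (heqtrans _ _ _ h2 k2)⟩)))
end

section
/- If ⊐ is a monotonic well-founded partial ordering on terms that contains the rewrite relation →_R, and ≻ is defined as the transitive closure of (⊐ ∪ ▷) where ▷ is the strict subterm relation, then ≻ is well-founded. -/
/-- Applicative terms over a signature `Sig` and variables `V`. -/
inductive Tm (Sig V : Type*) : Type _
  | sym : Sig → Tm Sig V
  | var : V → Tm Sig V
  | app : Tm Sig V → Tm Sig V → Tm Sig V

/-- `ImmSup s t` : `t` is an immediate subterm of `s` (so `s ▷₁ t`). -/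
def ImmSup {Sig V : Type*} (s t : Tm Sig V) : Prop :=
  (∃ u, s = Tm.app t u) ∨ (∃ u, s = Tm.app u t)

private theorem acc_swap_immSup {Sig V : Type*} (t : Tm Sig V) :
    Acc (fun a b => ImmSup b a) t := by
  induction t with
  | sym f => exact Acc.intro _ (by rintro a (⟨u, h⟩ | ⟨u, h⟩) <;> cases h)
  | var v => exact Acc.intro _ (by rintro a (⟨u, h⟩ | ⟨u, h⟩) <;> cases h)
  | app x y ihx ihy =>
    refine Acc.intro _ ?_
    rintro a (⟨u, h⟩ | ⟨u, h⟩) <;> cases h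
    · exact ihx
    · exact ihy

/-- If `⊐` is a monotonic well-founded partial ordering on terms containing the
rewrite relation `→_R`, then the transitive closure of `⊐ ∪ ▷` is well-founded,
where `▷` is the (immediate) subterm relation. -/
theorem wellFounded_transGen_union_subterm {Sig V : Type*}
    (gt Rw : Tm Sig V → Tm Sig V → Prop)
    (hwf : WellFounded (fun a b => gt b a))
    (htrans : ∀ a b c, gt a b → gt b c → gt a c)
    (hirr : ∀ a, ¬ gt a a)
    (hmonoL : ∀ s t u, gt s t → gt (Tm.app s u) (Tm.app t u))
    (hmonoR : ∀ s t u, gt s t → gt (Tm.app u s) (Tm.app u t))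
    (hRw : ∀ a b, Rw a b → gt a b) :
    WellFounded (fun a b =>
      Relation.TransGen (fun x y => gt x y ∨ ImmSup x y) b a) := by
  set step : Tm Sig V → Tm Sig V → Prop := fun x y => gt x y ∨ ImmSup x y with hstep
  -- quasi-commutation: ▷ then ⊐ can be replaced by ⊐ then ▷
  have comm : ∀ a x b, ImmSup a x → gt x b → ∃ d, gt a d ∧ ImmSup d b := by
    rintro a x b (⟨u, rfl⟩ | ⟨u, rfl⟩) hxb
    · exact ⟨Tm.app b u, hmonoL _ _ _ hxb, Or.inl ⟨u, rfl⟩⟩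
    · exact ⟨Tm.app u b, hmonoR _ _ _ hxb, Or.inr ⟨u, rfl⟩⟩
  -- the union is well-founded
  have hU : WellFounded (fun a b => step b a) := by
    constructor
    intro a
    induction hwf.apply a with
    | intro a _ ihr =>
      -- `ihr : ∀ b, gt a b → Acc (fun a b => step b a) b`
      have key : ∀ a : Tm Sig V, Acc (fun a b => ImmSup b a) a →
          (∀ b, gt a b → Acc (fun a b => step b a) b) →
          Acc (fun a b => step b a) a := by
        intro a hq
        induction hq with
        | intro a _ ihq =>
          intro hr
          refine Acc.intro _ ?_
          rintro x (hx | hx)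
          · exact hr x hx
          · refine ihq x hx ?_
            intro b hb
            obtain ⟨d, had, hdb⟩ := comm a x b hx hb
            exact (hr d had).inv (Or.inr hdb)
      exact key a (acc_swap_immSup a) ihr
  have heq : (fun a b => Relation.TransGen step b a)
      = Relation.TransGen (fun a b => step b a) := by
    funext a b
    exact propext Relation.transGen_swap.symm
  exact heq ▸ hU.transGen
end

section
/- Each derivation of bounded rewriting induction that preserves bounds maintains the invariant that all equation contexts are bounded; in particular, the abstract 'peak commutation' lemma holds: let ≻ be a well-founded relation on ground terms, s a fixed term, and define u →_s v if u = C[a], v = C[b] with s ≻ a, s ≻ b, and a →_R* b. Suppose →_R is terminating, s is a minimal counterexample to local ground confluence (so all terms strictly below s w.r.t. ≻ or reachable via →_R⁺ are confluent in the sense of part (ii) of the minimality lemma). Then whenever v ←_s u →_s w there exists u' such that v →_s u' ←_s w. -/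
/-- One-hole contexts over applicative terms. -/
inductive Ctx (Sig V : Type*) : Type _
  | hole : Ctx Sig V
  | appL : Ctx Sig V → Tm Sig V → Ctx Sig V
  | appR : Tm Sig V → Ctx Sig V → Ctx Sig V

/-- Filling the hole of a one-hole context. -/
def Ctx.fill {Sig V : Type*} : Ctx Sig V → Tm Sig V → Tm Sig V
  | .hole, t => t
  | .appL C s, t => .app (Ctx.fill C t) s
  | .appR s C, t => .app s (Ctx.fill C t)

def Ctx.comp {Sig V : Type*} : Ctx Sig V → Ctx Sig V → Ctx Sig V
  | .hole, D => D
  | .appL C t, D => .appL (Ctx.comp C D) t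
  | .appR t C, D => .appR t (Ctx.comp C D)

theorem Ctx.fill_comp {Sig V : Type*} (C D : Ctx Sig V) (t : Tm Sig V) :
    (C.comp D).fill t = C.fill (D.fill t) := by
  induction C with
  | hole => rfl
  | appL C s ih => simp [Ctx.comp, Ctx.fill, ih]
  | appR s C ih => simp [Ctx.comp, Ctx.fill, ih]

theorem ctx_decomp {Sig V : Type*} (C₁ : Ctx Sig V) :
    ∀ (C₂ : Ctx Sig V) (a₁ a₂ : Tm Sig V), C₁.fill a₁ = C₂.fill a₂ →
    (∃ D, C₂ = C₁.comp D ∧ a₁ = D.fill a₂) ∨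
    (∃ D, C₁ = C₂.comp D ∧ a₂ = D.fill a₁) ∨
    (∃ K₁ K₂ : Tm Sig V → Ctx Sig V,
      (∀ x y, (K₁ y).fill x = (K₂ x).fill y) ∧ C₁ = K₁ a₂ ∧ C₂ = K₂ a₁) := by
  induction C₁ with
  | hole =>
    intro C₂ a₁ a₂ h
    exact Or.inl ⟨C₂, rfl, h⟩
  | appL C t ih =>
    intro C₂ a₁ a₂ h
    cases C₂ with
    | hole => exact Or.inr (Or.inl ⟨.appL C t, rfl, h.symm⟩)
    | appL C' t' =>
      simp only [Ctx.fill, Tm.app.injEq] at h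
      obtain ⟨h1, h2⟩ := h
      subst h2
      rcases ih C' a₁ a₂ h1 with ⟨D, hD, ha⟩ | ⟨D, hD, ha⟩ | ⟨K₁, K₂, hK, h1, h2⟩
      · exact Or.inl ⟨D, by simp [Ctx.comp, hD], ha⟩
      · exact Or.inr (Or.inl ⟨D, by simp [Ctx.comp, hD], ha⟩)
      · exact Or.inr (Or.inr ⟨fun y => .appL (K₁ y) t, fun x => .appL (K₂ x) t,
          fun x y => by simp [Ctx.fill, hK], by simp [h1], by simp [h2]⟩)
    | appR t' C' =>
      simp only [Ctx.fill, Tm.app.injEq] at h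
      obtain ⟨h1, h2⟩ := h
      refine Or.inr (Or.inr ⟨fun y => .appL C (C'.fill y), fun x => .appR (C.fill x) C',
        fun x y => rfl, by simp [h2], by simp [h1]⟩)
  | appR t C ih =>
    intro C₂ a₁ a₂ h
    cases C₂ with
    | hole => exact Or.inr (Or.inl ⟨.appR t C, rfl, h.symm⟩)
    | appR t' C' =>
      simp only [Ctx.fill, Tm.app.injEq] at h
      obtain ⟨h2, h1⟩ := h
      subst h2
      rcases ih C' a₁ a₂ h1 with ⟨D, hD, ha⟩ | ⟨D, hD, ha⟩ | ⟨K₁, K₂, hK, h1, h2⟩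
      · exact Or.inl ⟨D, by simp [Ctx.comp, hD], ha⟩
      · exact Or.inr (Or.inl ⟨D, by simp [Ctx.comp, hD], ha⟩)
      · exact Or.inr (Or.inr ⟨fun y => .appR t (K₁ y), fun x => .appR t (K₂ x),
          fun x y => by simp [Ctx.fill, hK], by simp [h1], by simp [h2]⟩)
    | appL C' t' =>
      simp only [Ctx.fill, Tm.app.injEq] at h
      obtain ⟨h1, h2⟩ := h
      refine Or.inr (Or.inr ⟨fun y => .appR (C'.fill y) C, fun x => .appL C' (C.fill x),
        fun x y => rfl, by simp [h1], by simp [h2]⟩)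

/-- A bounded reduction step under the bound `s`: replace a subterm `a` with
`s ≻ a` by an `→_R*`-reduct `b` with `s ≻ b`. -/
def BStep {Sig V : Type*} (Rw succ : Tm Sig V → Tm Sig V → Prop)
    (s u v : Tm Sig V) : Prop :=
  ∃ (C : Ctx Sig V) (a b : Tm Sig V),
    u = C.fill a ∧ v = C.fill b ∧ succ s a ∧ succ s b ∧ Relation.ReflTransGen Rw a b

/-- Peak commutation for bounded reduction below a minimal counterexample `s`:
if `→_R` is terminating, `(≻,⪰)` is a bounding pair, and every term strictly
below `s` (w.r.t. `≻` or reachable by `→_R⁺`) is confluent, then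
`←_s · →_s ⊆ →_s · ←_s`. -/
theorem bounded_peak_commutation {Sig V : Type*}
    (Rw succ succeq : Tm Sig V → Tm Sig V → Prop)
    (hterm : WellFounded (fun a b => Rw b a))
    (hctx : ∀ (C : Ctx Sig V) a b, Rw a b → Rw (C.fill a) (C.fill b))
    (hwf : WellFounded (fun a b => succ b a))
    (htrans : ∀ a b c, succ a b → succ b c → succ a c)
    (hirr : ∀ a, ¬ succ a a)
    (hrefl : ∀ a, succeq a a)
    (heqtrans : ∀ a b c, succeq a b → succeq b c → succeq a c)
    (hsub : ∀ a b, succ a b → succeq a b)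
    (hcompat₁ : ∀ a b c, succ a b → succeq b c → succ a c)
    (hcompat₂ : ∀ a b c, succeq a b → succ b c → succ a c)
    (hRw : ∀ a b, Rw a b → succeq a b)
    (hsubL : ∀ a b : Tm Sig V, succeq (Tm.app a b) a)
    (hsubR : ∀ a b : Tm Sig V, succeq (Tm.app a b) b)
    (s : Tm Sig V)
    (hmin : ∀ r, (succ s r ∨ Relation.TransGen Rw s r) →
      ∀ q₁ q₂, Relation.ReflTransGen Rw r q₁ → Relation.ReflTransGen Rw r q₂ →
        ∃ q, Relation.ReflTransGen Rw q₁ q ∧ Relation.ReflTransGen Rw q₂ q)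
    (u v w : Tm Sig V)
    (huv : BStep Rw succ s u v) (huw : BStep Rw succ s u w) :
    ∃ u', BStep Rw succ s v u' ∧ BStep Rw succ s w u' := by
  -- auxiliary closure facts
  have rtc_ctx : ∀ (C : Ctx Sig V) {a b}, Relation.ReflTransGen Rw a b →
      Relation.ReflTransGen Rw (C.fill a) (C.fill b) := by
    intro C a b h
    exact Relation.ReflTransGen.lift C.fill (fun x y hxy => hctx C x y hxy) a b h
  have seq_of_rtc : ∀ {a b}, Relation.ReflTransGen Rw a b → succeq a b := by
    intro a b h
    induction h with
    | refl => exact hrefl _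
    | tail _ hstep ih => exact heqtrans _ _ _ ih (hRw _ _ hstep)
  obtain ⟨C₁, a₁, b₁, hu1, hv, hsa1, hsb1, hr1⟩ := huv
  obtain ⟨C₂, a₂, b₂, hu2, hw, hsa2, hsb2, hr2⟩ := huw
  have heq : C₁.fill a₁ = C₂.fill a₂ := hu1 ▸ hu2
  rcases ctx_decomp C₁ C₂ a₁ a₂ heq with ⟨D, hD, ha⟩ | ⟨D, hD, ha⟩ | ⟨K₁, K₂, hK, h1, h2⟩
  · -- the hole of C₂ lies inside a₁
    have hstep : Relation.ReflTransGen Rw a₁ (D.fill b₂) := ha ▸ rtc_ctx D hr2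
    obtain ⟨q, hq1, hq2⟩ := hmin a₁ (Or.inl hsa1) b₁ (D.fill b₂) hr1 hstep
    have hsq : succ s q := hcompat₁ _ _ _ hsb1 (seq_of_rtc hq1)
    have hsDb : succ s (D.fill b₂) := hcompat₁ _ _ _ hsa1 (seq_of_rtc hstep)
    refine ⟨C₁.fill q, ⟨C₁, b₁, q, hv, rfl, hsb1, hsq, hq1⟩,
      ⟨C₁, D.fill b₂, q, ?_, rfl, hsDb, hsq, hq2⟩⟩
    rw [hw, hD, Ctx.fill_comp]
  · -- the hole of C₁ lies inside a₂
    have hstep : Relation.ReflTransGen Rw a₂ (D.fill b₁) := ha ▸ rtc_ctx D hr1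
    obtain ⟨q, hq1, hq2⟩ := hmin a₂ (Or.inl hsa2) b₂ (D.fill b₁) hr2 hstep
    have hsq : succ s q := hcompat₁ _ _ _ hsb2 (seq_of_rtc hq1)
    have hsDb : succ s (D.fill b₁) := hcompat₁ _ _ _ hsa2 (seq_of_rtc hstep)
    refine ⟨C₂.fill q, ⟨C₂, D.fill b₁, q, ?_, rfl, hsDb, hsq, hq2⟩,
      ⟨C₂, b₂, q, hw, rfl, hsb2, hsq, hq1⟩⟩
    rw [hv, hD, Ctx.fill_comp]
  · -- parallel positions
    refine ⟨(K₁ b₂).fill b₁,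
      ⟨K₂ b₁, a₂, b₂, ?_, hK b₁ b₂, hsa2, hsb2, hr2⟩,
      ⟨K₁ b₂, a₁, b₁, ?_, rfl, hsa1, hsb1, hr1⟩⟩
    · rw [hv, h1, hK b₁ a₂]
    · rw [hw, h2, hK a₁ b₂]
end

section
/- If an abstract rewriting system is terminating and every element has the property that all its one-step peaks arising from 'critical' situations are convertible via a bounded conversion (each conversion step uses redexes strictly smaller than the source with respect to a well-founded relation compatible with reduction), and all non-critical peaks are directly joinable, then the system is confluent. -/
/-- A single bounded conversion step with bound `s`: a subterm `a` with
`s ≻ a` is replaced by `b` with `s ≻ b`, where `a →* b` or `b →* a`. -/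
def BConvStep {Sig V : Type*} (Rw succ : Tm Sig V → Tm Sig V → Prop)
    (s u v : Tm Sig V) : Prop :=
  ∃ (C : Ctx Sig V) (a b : Tm Sig V),
    u = C.fill a ∧ v = C.fill b ∧ succ s a ∧ succ s b ∧
    (Relation.ReflTransGen Rw a b ∨ Relation.ReflTransGen Rw b a)

private lemma trich {Sig V : Type*} :
    ∀ (C₁ C₂ : Ctx Sig V) (a₁ a₂ : Tm Sig V), C₁.fill a₁ = C₂.fill a₂ →
    (∃ E : Ctx Sig V, (∀ y, C₂.fill y = C₁.fill (E.fill y)) ∧ a₁ = E.fill a₂) ∨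
    (∃ E : Ctx Sig V, (∀ x, C₁.fill x = C₂.fill (E.fill x)) ∧ a₂ = E.fill a₁) ∨
    (∃ D : Tm Sig V → Tm Sig V → Tm Sig V,
      (∀ x, C₁.fill x = D x a₂) ∧ (∀ y, C₂.fill y = D a₁ y) ∧
      (∀ x, ∃ C : Ctx Sig V, ∀ y, D x y = C.fill y) ∧
      (∀ y, ∃ C : Ctx Sig V, ∀ x, D x y = C.fill x)) := by
  intro C₁
  induction C₁ with
  | hole => intro C₂ a₁ a₂ h; exact Or.inl ⟨C₂, fun y => rfl, h⟩
  | appL C t ih =>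
    intro C₂ a₁ a₂ h
    cases C₂ with
    | hole => exact Or.inr (Or.inl ⟨Ctx.appL C t, fun x => rfl, h.symm⟩)
    | appL C' t' =>
      simp only [Ctx.fill] at h
      obtain ⟨h1, h2⟩ := Tm.app.inj h
      rcases ih C' a₁ a₂ h1 with ⟨E, hE, ha⟩ | ⟨E, hE, ha⟩ | ⟨D, hd1, hd2, hd3, hd4⟩
      · exact Or.inl ⟨E, fun y => by simp [Ctx.fill, hE y, h2], ha⟩
      · exact Or.inr (Or.inl ⟨E, fun x => by simp [Ctx.fill, hE x, h2], ha⟩)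
      · refine Or.inr (Or.inr ⟨fun x y => Tm.app (D x y) t,
          fun x => by simp [Ctx.fill, hd1 x], fun y => by simp [Ctx.fill, hd2 y, h2],
          fun x => ?_, fun y => ?_⟩)
        · obtain ⟨Cw, hCw⟩ := hd3 x
          exact ⟨Ctx.appL Cw t, fun y => by simp [Ctx.fill, hCw y]⟩
        · obtain ⟨Cw, hCw⟩ := hd4 y
          exact ⟨Ctx.appL Cw t, fun x => by simp [Ctx.fill, hCw x]⟩
    | appR t' C' =>
      simp only [Ctx.fill] at h
      obtain ⟨h1, h2⟩ := Tm.app.inj h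
      exact Or.inr (Or.inr ⟨fun x y => Tm.app (C.fill x) (C'.fill y),
        fun x => by simp [Ctx.fill, h2], fun y => by simp [Ctx.fill, h1],
        fun x => ⟨Ctx.appR (C.fill x) C', fun y => rfl⟩,
        fun y => ⟨Ctx.appL C (C'.fill y), fun x => rfl⟩⟩)
  | appR t C ih =>
    intro C₂ a₁ a₂ h
    cases C₂ with
    | hole => exact Or.inr (Or.inl ⟨Ctx.appR t C, fun x => rfl, h.symm⟩)
    | appL C' t' =>
      simp only [Ctx.fill] at h
      obtain ⟨h1, h2⟩ := Tm.app.inj h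
      exact Or.inr (Or.inr ⟨fun x y => Tm.app (C'.fill y) (C.fill x),
        fun x => by simp [Ctx.fill, h1], fun y => by simp [Ctx.fill, h2],
        fun x => ⟨Ctx.appL C' (C.fill x), fun y => rfl⟩,
        fun y => ⟨Ctx.appR (C'.fill y) C, fun x => rfl⟩⟩)
    | appR t' C' =>
      simp only [Ctx.fill] at h
      obtain ⟨h1, h2⟩ := Tm.app.inj h
      rcases ih C' a₁ a₂ h2 with ⟨E, hE, ha⟩ | ⟨E, hE, ha⟩ | ⟨D, hd1, hd2, hd3, hd4⟩
      · exact Or.inl ⟨E, fun y => by simp [Ctx.fill, hE y, h1], ha⟩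
      · exact Or.inr (Or.inl ⟨E, fun x => by simp [Ctx.fill, hE x, h1], ha⟩)
      · refine Or.inr (Or.inr ⟨fun x y => Tm.app t (D x y),
          fun x => by simp [Ctx.fill, hd1 x], fun y => by simp [Ctx.fill, hd2 y, h1],
          fun x => ?_, fun y => ?_⟩)
        · obtain ⟨Cw, hCw⟩ := hd3 x
          exact ⟨Ctx.appR t Cw, fun y => by simp [Ctx.fill, hCw y]⟩
        · obtain ⟨Cw, hCw⟩ := hd4 y
          exact ⟨Ctx.appR t Cw, fun x => by simp [Ctx.fill, hCw x]⟩

private lemma fill_star {Sig V : Type*} {Rw : Tm Sig V → Tm Sig V → Prop}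
    (hctx : ∀ (C : Ctx Sig V) a b, Rw a b → Rw (C.fill a) (C.fill b))
    (C : Ctx Sig V) {a b : Tm Sig V} (h : Relation.ReflTransGen Rw a b) :
    Relation.ReflTransGen Rw (C.fill a) (C.fill b) := by
  induction h with
  | refl => exact Relation.ReflTransGen.refl
  | tail _ hbc ih => exact ih.tail (hctx C _ _ hbc)

/-- Abstract Ground Critical Peak Theorem: a terminating rewrite relation in
which every non-joinable one-step peak is a critical-peak instance, and all
critical-peak instances are convertible by conversions bounded strictly below
the peak source (w.r.t. a bounding pair `(≻,⪰)` with `→_R ∪ ▷ ⊆ ⪰`), is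
confluent. -/
theorem critical_peaks_bounded_convertible_confluent {Sig V : Type*}
    (Rw succ succeq : Tm Sig V → Tm Sig V → Prop)
    (CP : Tm Sig V → Tm Sig V → Tm Sig V → Prop)
    (hterm : WellFounded (fun a b => Rw b a))
    (hctx : ∀ (C : Ctx Sig V) a b, Rw a b → Rw (C.fill a) (C.fill b))
    (hwf : WellFounded (fun a b => succ b a))
    (htrans : ∀ a b c, succ a b → succ b c → succ a c)
    (hirr : ∀ a, ¬ succ a a)
    (hrefl : ∀ a, succeq a a)
    (heqtrans : ∀ a b c, succeq a b → succeq b c → succeq a c)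
    (hsub : ∀ a b, succ a b → succeq a b)
    (hcompat₁ : ∀ a b c, succ a b → succeq b c → succ a c)
    (hcompat₂ : ∀ a b c, succeq a b → succ b c → succ a c)
    (hRw : ∀ a b, Rw a b → succeq a b)
    (hsubL : ∀ a b : Tm Sig V, succeq (Tm.app a b) a)
    (hsubR : ∀ a b : Tm Sig V, succeq (Tm.app a b) b)
    (hpeak : ∀ s t₁ t₂, Rw s t₁ → Rw s t₂ →
      (∃ t, Relation.ReflTransGen Rw t₁ t ∧ Relation.ReflTransGen Rw t₂ t) ∨ CP s t₁ t₂)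
    (hconv : ∀ s t₁ t₂, CP s t₁ t₂ →
      Relation.ReflTransGen (BConvStep Rw succ s) t₁ t₂) :
    ∀ s t q, Relation.ReflTransGen Rw s t → Relation.ReflTransGen Rw s q →
      ∃ w, Relation.ReflTransGen Rw t w ∧ Relation.ReflTransGen Rw q w := by
  -- reflexive-transitive Rw reductions are weakly below their source
  have hRweq : ∀ {a b : Tm Sig V}, Relation.ReflTransGen Rw a b → succeq a b := by
    intro a b h
    induction h with
    | refl => exact hrefl a
    | tail _ h ih => exact heqtrans _ _ _ ih (hRw _ _ h)
  -- the combined order: x below s iff s ≻ x or s →⁺ x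
  set lt : Tm Sig V → Tm Sig V → Prop :=
    fun x y => succ y x ∨ Relation.TransGen Rw y x with hlt
  -- well-foundedness of lt
  have key : ∀ a, (∀ y, succ a y → Acc lt y) → Acc lt a := by
    intro a
    induction a using (hterm.transGen).induction with
    | _ a ih =>
      intro hs
      constructor
      intro y hy
      rcases hy with h | h
      · exact hs y h
      · refine ih y h.swap ?_
        intro z hz
        exact hs z (hcompat₂ a y z (hRweq h.to_reflTransGen) hz)
  have accAll : ∀ a, Acc lt a := by
    intro a
    induction a using hwf.induction with
    | _ a ih => exact key a ih
  -- main well-founded induction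
  intro s₀
  refine (WellFounded.intro accAll).induction
    (C := fun s => ∀ t q, Relation.ReflTransGen Rw s t → Relation.ReflTransGen Rw s q →
      ∃ w, Relation.ReflTransGen Rw t w ∧ Relation.ReflTransGen Rw q w) s₀ ?_
  intro s IH t q hst hsq
  rcases hst.cases_head with rfl | ⟨t₁, hst₁, ht₁t⟩
  · exact ⟨q, hsq, Relation.ReflTransGen.refl⟩
  rcases hsq.cases_head with rfl | ⟨q₁, hsq₁, hq₁q⟩
  · exact ⟨t, Relation.ReflTransGen.refl, hst⟩
  -- join the one-step peak t₁ ← s → q₁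
  have hjoin : ∃ u, Relation.ReflTransGen Rw t₁ u ∧ Relation.ReflTransGen Rw q₁ u := by
    rcases hpeak s t₁ q₁ hst₁ hsq₁ with h | hcp
    · exact h
    -- bounded, directed conversion steps
    set SS : Tm Sig V → Tm Sig V → Prop := fun u v =>
      ∃ (C : Ctx Sig V) (a b : Tm Sig V),
        u = C.fill a ∧ v = C.fill b ∧ succ s a ∧ succ s b ∧
        Relation.ReflTransGen Rw a b with hSS
    have SSsub : ∀ {u v}, SS u v → Relation.ReflTransGen Rw u v := by
      rintro u v ⟨C, a, b, rfl, rfl, -, -, hab⟩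
      exact fill_star hctx C hab
    have SSsubStar : ∀ {u v}, Relation.ReflTransGen SS u v →
        Relation.ReflTransGen Rw u v := by
      intro u v h
      induction h with
      | refl => exact Relation.ReflTransGen.refl
      | tail _ h ih => exact ih.trans (SSsub h)
    -- joinability of Rw-reducts of things strictly below s
    have CRred : ∀ a, succ s a → ∀ x y, Relation.ReflTransGen Rw a x →
        Relation.ReflTransGen Rw a y →
        ∃ w, Relation.ReflTransGen Rw x w ∧ Relation.ReflTransGen Rw y w :=
      fun a ha => IH a (Or.inl ha)
    -- SS has the diamond property
    have diamond : ∀ u v₁ v₂, SS u v₁ → SS u v₂ → ∃ w, SS v₁ w ∧ SS v₂ w := by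
      rintro u v₁ v₂ ⟨C₁, a₁, b₁, rfl, rfl, ha₁, hb₁, hab₁⟩
        ⟨C₂, a₂, b₂, hu, rfl, ha₂, hb₂, hab₂⟩
      rcases trich C₁ C₂ a₁ a₂ hu with ⟨E, hE, ha⟩ | ⟨E, hE, ha⟩ | ⟨D, hd1, hd2, hd3, hd4⟩
      · -- a₂ sits inside a₁
        have h₂' : Relation.ReflTransGen Rw a₁ (E.fill b₂) := by
          rw [ha]; exact fill_star hctx E hab₂
        obtain ⟨w', hw1, hw2⟩ := CRred a₁ ha₁ b₁ (E.fill b₂) hab₁ h₂'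
        have hsw' : succ s w' := hcompat₁ s b₁ w' hb₁ (hRweq hw1)
        have hsE : succ s (E.fill b₂) := hcompat₁ s a₁ _ ha₁ (hRweq h₂')
        exact ⟨C₁.fill w', ⟨C₁, b₁, w', rfl, rfl, hb₁, hsw', hw1⟩,
          ⟨C₁, E.fill b₂, w', hE b₂, rfl, hsE, hsw', hw2⟩⟩
      · -- a₁ sits inside a₂
        have h₁' : Relation.ReflTransGen Rw a₂ (E.fill b₁) := by
          rw [ha]; exact fill_star hctx E hab₁
        obtain ⟨w', hw2, hw1⟩ := CRred a₂ ha₂ b₂ (E.fill b₁) hab₂ h₁'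
        have hsw' : succ s w' := hcompat₁ s b₂ w' hb₂ (hRweq hw2)
        have hsE : succ s (E.fill b₁) := hcompat₁ s a₂ _ ha₂ (hRweq h₁')
        exact ⟨C₂.fill w', ⟨C₂, E.fill b₁, w', hE b₁, rfl, hsE, hsw', hw1⟩,
          ⟨C₂, b₂, w', rfl, rfl, hb₂, hsw', hw2⟩⟩
      · -- disjoint positions
        obtain ⟨Cb, hCb⟩ := hd3 b₁
        obtain ⟨Cb', hCb'⟩ := hd4 b₂
        exact ⟨D b₁ b₂,
          ⟨Cb, a₂, b₂, (hd1 b₁).trans (hCb a₂), hCb b₂, ha₂, hb₂, hab₂⟩,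
          ⟨Cb', a₁, b₁, (hd2 b₂).trans (hCb' a₁), hCb' b₁, ha₁, hb₁, hab₁⟩⟩
    -- strip lemma for SS
    have strip : ∀ u v w, SS u v → Relation.ReflTransGen SS u w →
        ∃ x, SS w x ∧ Relation.ReflTransGen SS v x := by
      intro u v w huv huw
      induction huw with
      | refl => exact ⟨v, huv, Relation.ReflTransGen.refl⟩
      | tail _ h ih =>
        obtain ⟨x, hwx, hvx⟩ := ih
        obtain ⟨y, h1, h2⟩ := diamond _ _ _ h hwx
        exact ⟨y, h1, hvx.tail h2⟩
    -- confluence of SS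
    have conf : ∀ u v, Relation.ReflTransGen SS u v → ∀ w, Relation.ReflTransGen SS u w →
        ∃ x, Relation.ReflTransGen SS v x ∧ Relation.ReflTransGen SS w x := by
      intro u v huv
      induction huv with
      | refl => exact fun w h => ⟨w, h, Relation.ReflTransGen.refl⟩
      | tail _ h ih =>
        intro w huw
        obtain ⟨x, hvx, hwx⟩ := ih w huw
        obtain ⟨y, hxy, hy⟩ := strip _ _ _ h hvx
        exact ⟨y, hy, hwx.tail hxy⟩
    -- bounded conversions are joinable by SS
    have convjoin : ∀ u v, Relation.ReflTransGen (BConvStep Rw succ s) u v →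
        ∃ x, Relation.ReflTransGen SS u x ∧ Relation.ReflTransGen SS v x := by
      intro u v h
      induction h with
      | refl => exact ⟨u, Relation.ReflTransGen.refl, Relation.ReflTransGen.refl⟩
      | @tail v' v _ hstep ih =>
        obtain ⟨x, hux, hv'x⟩ := ih
        obtain ⟨C, a, b, hva, hvb, hsa, hsb, hor⟩ := hstep
        rcases hor with hab | hba
        · have hs : SS v' v := ⟨C, a, b, hva, hvb, hsa, hsb, hab⟩
          obtain ⟨y, hvy, hxy⟩ := conf v' v (Relation.ReflTransGen.single hs) x hv'x
          exact ⟨y, hux.trans hxy, hvy⟩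
        · have hs : SS v v' := ⟨C, b, a, hvb, hva, hsb, hsa, hba⟩
          exact ⟨x, hux, (Relation.ReflTransGen.single hs).trans hv'x⟩
    obtain ⟨x, h1, h2⟩ := convjoin t₁ q₁ (hconv s t₁ q₁ hcp)
    exact ⟨x, SSsubStar h1, SSsubStar h2⟩
  -- Newman-style completion of the diagram
  obtain ⟨u, ht₁u, hq₁u⟩ := hjoin
  obtain ⟨v, htv, huv⟩ := IH t₁ (Or.inr (Relation.TransGen.single hst₁)) t u ht₁t ht₁u
  obtain ⟨w, hqw, hvw⟩ := IH q₁ (Or.inr (Relation.TransGen.single hsq₁)) q v hq₁q (hq₁u.trans huv)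
  exact ⟨w, htv.trans hvw, hqw⟩
end

section
/- Lifting lemma for rewriting under substitutions: if sγ →_R t for a term s, substitution γ, and finite variable set X ⊇ Vars(s), then either (i) there exist a substitution δ agreeing with γ on X, a renamed rule ℓ → r [φ] with variables disjoint from X such that δ respects φ, a non-variable position p of s with s|_p δ = ℓδ and t = s[r]_p δ; or (ii) there exist a variable x ∈ Vars(s) and a substitution γ' with γ(x) →_R γ'(x), γ'(y) = γ(y) for y ≠ x, and t →_R* sγ'. -/
/-- Applying a substitution to a term. -/
def Tm.subst {Sig V : Type*} (γ : V → Tm Sig V) : Tm Sig V → Tm Sig V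
  | .sym f => .sym f
  | .var x => γ x
  | .app s t => .app (Tm.subst γ s) (Tm.subst γ t)

/-- The set of variables of a term. -/
def Tm.vars {Sig V : Type*} : Tm Sig V → Set V
  | .sym _ => ∅
  | .var x => {x}
  | .app s t => Tm.vars s ∪ Tm.vars t

/-- One-step rewriting with the (unconstrained) rules `R`, in any context. -/
def Rewrites {Sig V : Type*} (R : Set (Tm Sig V × Tm Sig V))
    (s t : Tm Sig V) : Prop :=
  ∃ (C : Ctx Sig V) (l r : Tm Sig V) (γ : V → Tm Sig V),
    (l, r) ∈ R ∧ s = C.fill (Tm.subst γ l) ∧ t = C.fill (Tm.subst γ r)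

namespace LiftAux

variable {Sig V : Type*}

/-- Applying a substitution to a context. -/
def Ctx.substC (γ : V → Tm Sig V) : Ctx Sig V → Ctx Sig V
  | .hole => .hole
  | .appL C t => .appL (Ctx.substC γ C) (Tm.subst γ t)
  | .appR t C => .appR (Tm.subst γ t) (Ctx.substC γ C)

theorem subst_fill (σ : V → Tm Sig V) (D : Ctx Sig V) (v : Tm Sig V) :
    Tm.subst σ (D.fill v) = (Ctx.substC σ D).fill (Tm.subst σ v) := by
  induction D with
  | hole => rfl
  | appL C t ih => simp [Ctx.fill, Ctx.substC, Tm.subst, ih]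
  | appR t C ih => simp [Ctx.fill, Ctx.substC, Tm.subst, ih]

theorem subst_subst (δ σ : V → Tm Sig V) (u : Tm Sig V) :
    Tm.subst δ (Tm.subst σ u) = Tm.subst (fun x => Tm.subst δ (σ x)) u := by
  induction u with
  | sym f => rfl
  | var x => rfl
  | app a b iha ihb => simp [Tm.subst, iha, ihb]

theorem subst_congr {δ γ : V → Tm Sig V} {u : Tm Sig V}
    (h : ∀ y ∈ Tm.vars u, δ y = γ y) : Tm.subst δ u = Tm.subst γ u := by
  induction u with
  | sym f => rfl
  | var x => exact h x (by simp [Tm.vars])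
  | app a b iha ihb =>
      simp only [Tm.subst]
      rw [iha (fun y hy => h y (Or.inl hy)), ihb (fun y hy => h y (Or.inr hy))]

theorem vars_fill_subset (D : Ctx Sig V) (v : Tm Sig V) :
    Tm.vars v ⊆ Tm.vars (D.fill v) := by
  induction D with
  | hole => exact subset_rfl
  | appL C t ih => intro y hy; exact Or.inl (ih hy)
  | appR t C ih => intro y hy; exact Or.inr (ih hy)

theorem substC_congr {δ γ : V → Tm Sig V} (D : Ctx Sig V) (v : Tm Sig V)
    (h : ∀ y ∈ Tm.vars (D.fill v), δ y = γ y) :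
    Ctx.substC δ D = Ctx.substC γ D := by
  induction D with
  | hole => rfl
  | appL C t ih =>
      simp only [Ctx.substC]
      rw [ih (fun y hy => h y (Or.inl hy)),
        subst_congr (fun y hy => h y (Or.inr hy))]
  | appR t C ih =>
      simp only [Ctx.substC]
      rw [ih (fun y hy => h y (Or.inr hy)),
        subst_congr (fun y hy => h y (Or.inl hy))]

theorem vars_rename (ρ : V → V) (u : Tm Sig V) :
    Tm.vars (Tm.subst (fun x => Tm.var (ρ x)) u) ⊆ Set.range ρ := by
  induction u with
  | sym f => simp [Tm.subst, Tm.vars]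
  | var x => intro y hy; simp [Tm.subst, Tm.vars] at hy; exact ⟨x, hy.symm⟩
  | app a b iha ihb =>
      intro y hy
      rcases hy with hy | hy
      · exact iha hy
      · exact ihb hy

theorem rewrites_appL {R : Set (Tm Sig V × Tm Sig V)} {a a' : Tm Sig V}
    (b : Tm Sig V) (h : Rewrites R a a') :
    Rewrites R (Tm.app a b) (Tm.app a' b) := by
  obtain ⟨C, l, r, σ, hR, h1, h2⟩ := h
  exact ⟨Ctx.appL C b, l, r, σ, hR, by simp [Ctx.fill, h1], by simp [Ctx.fill, h2]⟩

theorem rewrites_appR {R : Set (Tm Sig V × Tm Sig V)} {b b' : Tm Sig V}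
    (a : Tm Sig V) (h : Rewrites R b b') :
    Rewrites R (Tm.app a b) (Tm.app a b') := by
  obtain ⟨C, l, r, σ, hR, h1, h2⟩ := h
  exact ⟨Ctx.appR a C, l, r, σ, hR, by simp [Ctx.fill, h1], by simp [Ctx.fill, h2]⟩

theorem rt_appL {R : Set (Tm Sig V × Tm Sig V)} {a a' : Tm Sig V}
    (b : Tm Sig V) (h : Relation.ReflTransGen (Rewrites R) a a') :
    Relation.ReflTransGen (Rewrites R) (Tm.app a b) (Tm.app a' b) :=
  Relation.ReflTransGen.lift (fun x => Tm.app x b) (fun _ _ h => rewrites_appL b h) _ _ h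

theorem rt_appR {R : Set (Tm Sig V × Tm Sig V)} {b b' : Tm Sig V}
    (a : Tm Sig V) (h : Relation.ReflTransGen (Rewrites R) b b') :
    Relation.ReflTransGen (Rewrites R) (Tm.app a b) (Tm.app a b') :=
  Relation.ReflTransGen.lift (fun x => Tm.app a x) (fun _ _ h => rewrites_appR a h) _ _ h

theorem rt_subst {R : Set (Tm Sig V × Tm Sig V)} {γ γ' : V → Tm Sig V}
    (h : ∀ y, Relation.ReflTransGen (Rewrites R) (γ y) (γ' y)) (u : Tm Sig V) :
    Relation.ReflTransGen (Rewrites R) (Tm.subst γ u) (Tm.subst γ' u) := by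
  induction u with
  | sym f => exact .refl
  | var x => exact h x
  | app a b iha ihb =>
      exact (rt_appL _ iha).trans (rt_appR _ ihb)

theorem rt_fill {R : Set (Tm Sig V × Tm Sig V)} {γ γ' : V → Tm Sig V}
    (h : ∀ y, Relation.ReflTransGen (Rewrites R) (γ y) (γ' y))
    (D : Ctx Sig V) (w : Tm Sig V) :
    Relation.ReflTransGen (Rewrites R) ((Ctx.substC γ D).fill w)
      ((Ctx.substC γ' D).fill w) := by
  induction D with
  | hole => exact .refl
  | appL C t ih =>
      exact (rt_appL _ ih).trans (rt_appR _ (rt_subst h t))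
  | appR t C ih =>
      exact (rt_appL _ (rt_subst h t)).trans (rt_appR _ ih)

/-- Decomposition of a context position in `sγ` relative to `s`. -/
theorem decomp (s : Tm Sig V) (γ : V → Tm Sig V) :
    ∀ (C : Ctx Sig V) (u : Tm Sig V), Tm.subst γ s = C.fill u →
    (∃ (D : Ctx Sig V) (s' : Tm Sig V), s = D.fill s' ∧ (∀ y, s' ≠ Tm.var y) ∧
      Tm.subst γ s' = u ∧ C = Ctx.substC γ D) ∨
    (∃ (D : Ctx Sig V) (x : V) (C' : Ctx Sig V), s = D.fill (Tm.var x) ∧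
      γ x = C'.fill u ∧ ∀ v, C.fill v = (Ctx.substC γ D).fill (C'.fill v)) := by
  induction s with
  | sym f =>
      intro C u h
      cases C with
      | hole =>
          exact Or.inl ⟨Ctx.hole, Tm.sym f, rfl, fun y => by simp, h, rfl⟩
      | appL C t => exact absurd h (by simp [Tm.subst, Ctx.fill])
      | appR t C => exact absurd h (by simp [Tm.subst, Ctx.fill])
  | var x =>
      intro C u h
      exact Or.inr ⟨Ctx.hole, x, C, rfl, h, fun v => rfl⟩
  | app s₁ s₂ ih1 ih2 =>
      intro C u h
      cases C with
      | hole =>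
          exact Or.inl ⟨Ctx.hole, Tm.app s₁ s₂, rfl, fun y => by simp, h, rfl⟩
      | appL C₁ w =>
          simp only [Tm.subst, Ctx.fill, Tm.app.injEq] at h
          rcases ih1 C₁ u h.1 with ⟨D₁, s', hs, hnv, hu, hC⟩ | ⟨D₁, x, C', hs, hx, hfill⟩
          · refine Or.inl ⟨Ctx.appL D₁ s₂, s', ?_, hnv, hu, ?_⟩
            · simp [Ctx.fill, hs]
            · simp [Ctx.substC, hC, h.2]
          · refine Or.inr ⟨Ctx.appL D₁ s₂, x, C', ?_, hx, ?_⟩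
            · simp [Ctx.fill, hs]
            · intro v; simp [Ctx.fill, Ctx.substC, hfill v, h.2]
      | appR w C₂ =>
          simp only [Tm.subst, Ctx.fill, Tm.app.injEq] at h
          rcases ih2 C₂ u h.2 with ⟨D₂, s', hs, hnv, hu, hC⟩ | ⟨D₂, x, C', hs, hx, hfill⟩
          · refine Or.inl ⟨Ctx.appR s₁ D₂, s', ?_, hnv, hu, ?_⟩
            · simp [Ctx.fill, hs]
            · simp [Ctx.substC, hC, h.1]
          · refine Or.inr ⟨Ctx.appR s₁ D₂, x, C', ?_, hx, ?_⟩
            · simp [Ctx.fill, hs]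
            · intro v; simp [Ctx.fill, Ctx.substC, hfill v, h.1]

theorem exists_renaming [Infinite V] {X : Set V} (hX : X.Finite) :
    ∃ ρ : V → V, Function.Injective ρ ∧ Set.range ρ ∩ X = ∅ := by
  have h1 : Cardinal.mk X < Cardinal.mk V := lt_of_lt_of_le hX.lt_aleph0 (Cardinal.aleph0_le_mk V)
  have h2 : Cardinal.mk (Xᶜ : Set V) = Cardinal.mk V := Cardinal.mk_compl_of_infinite X h1
  obtain ⟨f⟩ := Cardinal.le_def V (Xᶜ : Set V) |>.mp h2.ge
  refine ⟨fun x => (f x : V), fun a b hab => f.injective (Subtype.ext hab), ?_⟩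
  ext y
  simp only [Set.mem_inter_iff, Set.mem_range, Set.mem_empty_iff_false, iff_false]
  rintro ⟨⟨x, rfl⟩, hy⟩
  exact (f x).2 hy

end LiftAux
open LiftAux
/-- Lifting lemma for rewriting under substitutions: if `sγ →_R t` and
`X ⊇ Vars(s)` is finite, then either (i) the step happens at a non-variable
position of `s`, using a renamed rule with variables disjoint from `X` and a
substitution `δ` agreeing with `γ` on `X`; or (ii) the step happens inside
`γ(x)` for some variable `x` of `s`, and `t →_R* sγ'` for the pointwise
updated substitution `γ'`. -/
theorem lifting_lemma {Sig V : Type*} [Infinite V]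
    (R : Set (Tm Sig V × Tm Sig V))
    (s : Tm Sig V) (γ : V → Tm Sig V) (X : Set V) (hXfin : X.Finite)
    (hvars : Tm.vars s ⊆ X) (t : Tm Sig V)
    (hstep : Rewrites R (Tm.subst γ s) t) :
    (∃ (δ : V → Tm Sig V) (l r l₀ r₀ : Tm Sig V) (ρ : V → V)
        (D : Ctx Sig V) (s' : Tm Sig V),
        (∀ x ∈ X, δ x = γ x) ∧
        (l₀, r₀) ∈ R ∧ Function.Injective ρ ∧
        l = Tm.subst (fun x => Tm.var (ρ x)) l₀ ∧
        r = Tm.subst (fun x => Tm.var (ρ x)) r₀ ∧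
        (Tm.vars l ∪ Tm.vars r) ∩ X = ∅ ∧
        s = D.fill s' ∧ (∀ x, s' ≠ Tm.var x) ∧
        Tm.subst δ s' = Tm.subst δ l ∧
        t = Tm.subst δ (D.fill r)) ∨
    (∃ (x : V) (γ' : V → Tm Sig V),
        x ∈ Tm.vars s ∧ Rewrites R (γ x) (γ' x) ∧
        (∀ y, y ≠ x → γ' y = γ y) ∧
        Relation.ReflTransGen (Rewrites R) t (Tm.subst γ' s)) := by
  classical
  obtain ⟨C, l₀, r₀, γ₀, hR, h1, h2⟩ := hstep
  rcases decomp s γ C _ h1 with ⟨D, s', hs, hnv, hu, hC⟩ | ⟨D, x, C', hs, hx, hfill⟩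
  · -- case (i)
    obtain ⟨ρ, hρinj, hρdisj⟩ := exists_renaming (V := V) hXfin
    have hnotX : ∀ y, ρ y ∉ X := by
      intro y hy
      have : ρ y ∈ Set.range ρ ∩ X := ⟨⟨y, rfl⟩, hy⟩
      simp [hρdisj] at this
    set δ : V → Tm Sig V :=
      fun v => if h : ∃ y, ρ y = v then γ₀ h.choose else γ v with hδdef
    have hδX : ∀ v ∈ X, δ v = γ v := by
      intro v hv
      have : ¬ ∃ y, ρ y = v := by
        rintro ⟨y, rfl⟩; exact hnotX y hv
      simp [hδdef, this]
    have hδρ : ∀ y, δ (ρ y) = γ₀ y := by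
      intro y
      have hex : ∃ z, ρ z = ρ y := ⟨y, rfl⟩
      have : hex.choose = y := hρinj hex.choose_spec
      simp [hδdef, dif_pos hex, this]
    have hvarsD : Tm.vars (D.fill s') ⊆ X := hs ▸ hvars
    have hδγ : ∀ y ∈ Tm.vars (D.fill s'), δ y = γ y := fun y hy => hδX y (hvarsD hy)
    have hrename : ∀ u : Tm Sig V,
        Tm.subst δ (Tm.subst (fun x => Tm.var (ρ x)) u) = Tm.subst γ₀ u := by
      intro u
      rw [subst_subst]
      exact subst_congr (fun y _ => hδρ y)
    refine Or.inl ⟨δ, Tm.subst (fun x => Tm.var (ρ x)) l₀,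
      Tm.subst (fun x => Tm.var (ρ x)) r₀, l₀, r₀, ρ, D, s',
      hδX, hR, hρinj, rfl, rfl, ?_, hs, hnv, ?_, ?_⟩
    · apply Set.eq_empty_of_subset_empty
      rw [← hρdisj]
      rintro y ⟨hy, hyX⟩
      rcases hy with hy | hy
      · exact ⟨vars_rename ρ l₀ hy, hyX⟩
      · exact ⟨vars_rename ρ r₀ hy, hyX⟩
    · rw [hrename l₀, ← hu]
      exact subst_congr (fun y hy => hδγ y (vars_fill_subset D s' hy))
    · rw [subst_fill, hrename r₀, substC_congr D s' hδγ, ← hC, h2]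
  · -- case (ii)
    set γ' : V → Tm Sig V :=
      fun y => if y = x then C'.fill (Tm.subst γ₀ r₀) else γ y with hγ'def
    have hγ'x : γ' x = C'.fill (Tm.subst γ₀ r₀) := by simp [hγ'def]
    have hstep' : Rewrites R (γ x) (γ' x) :=
      ⟨C', l₀, r₀, γ₀, hR, hx, hγ'x⟩
    have hrt : ∀ y, Relation.ReflTransGen (Rewrites R) (γ y) (γ' y) := by
      intro y
      by_cases hy : y = x
      · subst hy; exact Relation.ReflTransGen.single hstep'
      · rw [hγ'def]; simp only [if_neg hy]; exact .refl
    refine Or.inr ⟨x, γ', ?_, hstep', fun y hy => by simp [hγ'def, hy], ?_⟩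
    · rw [hs]; exact vars_fill_subset D (Tm.var x) (by simp [Tm.vars])
    · have ht : t = (Ctx.substC γ D).fill (γ' x) := by
        rw [h2, hfill, hγ'x]
      have hsγ' : Tm.subst γ' s = (Ctx.substC γ' D).fill (γ' x) := by
        rw [hs, subst_fill]; rfl
      rw [ht, hsγ']
      exact rt_fill hrt D (γ' x)
end

section
/- If B is a binary relation, S ⊆ B, ⪰ = B* and ≻ = B*·S·B*, then ≻ is well-founded if and only if there is no infinite B-sequence containing infinitely many S-steps. -/
variable {A : Type*}

/-- The strict relation `≻ = B* ∘ S ∘ B*` built from a base relation `B`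
and its strict steps `S`. -/
def Gt (B S : A → A → Prop) (a b : A) : Prop :=
  ∃ u v, Relation.ReflTransGen B a u ∧ S u v ∧ Relation.ReflTransGen B v b

open Relation

private lemma chain_of_rtg {B : A → A → Prop} {x y : A} (h : ReflTransGen B x y) :
    ∃ m, ∃ c : ℕ → A, c 0 = x ∧ c m = y ∧ ∀ i < m, B (c i) (c (i + 1)) := by
  induction h with
  | refl => exact ⟨0, fun _ => x, rfl, rfl, fun i hi => absurd hi (Nat.not_lt_zero i)⟩
  | @tail b z h' hB ih =>
    obtain ⟨m, c, hc0, hcm, hstep⟩ := ih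
    refine ⟨m + 1, fun i => if i ≤ m then c i else z, by simp [hc0], by simp, ?_⟩
    intro i hi
    rcases Nat.lt_or_ge i m with h1 | h1
    · simp only [if_pos (Nat.le_of_lt h1), if_pos (Nat.succ_le_of_lt h1)]
      exact hstep i h1
    · have : i = m := by omega
      subst this
      simp only [if_pos le_rfl, if_neg (by omega : ¬ i + 1 ≤ i)]
      rw [hcm]; exact hB

private lemma chain_of_gt {B S : A → A → Prop} {a b : A} (hSB : ∀ a b, S a b → B a b)
    (h : Gt B S a b) :
    ∃ m, ∃ c : ℕ → A, c 0 = a ∧ c m = b ∧ (∀ i < m, B (c i) (c (i + 1))) ∧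
      ∃ i < m, S (c i) (c (i + 1)) := by
  obtain ⟨u, v, h1, hS, h2⟩ := h
  obtain ⟨m1, c1, hc10, hc1m, hs1⟩ := chain_of_rtg h1
  obtain ⟨m2, c2, hc20, hc2m, hs2⟩ := chain_of_rtg h2
  refine ⟨m1 + 1 + m2, fun i => if i ≤ m1 then c1 i else c2 (i - (m1 + 1)), ?_, ?_, ?_, ?_⟩
  · simp [hc10]
  · have h1' : ¬ m1 + 1 + m2 ≤ m1 := by omega
    simp only [if_neg h1']
    have : m1 + 1 + m2 - (m1 + 1) = m2 := by omega
    rw [this, hc2m]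
  · intro i hi
    rcases Nat.lt_or_ge i m1 with hlt | hge
    · simp only [if_pos (Nat.le_of_lt hlt), if_pos (Nat.succ_le_of_lt hlt)]
      exact hs1 i hlt
    · rcases Nat.eq_or_lt_of_le hge with heq | hgt
      · rw [← heq]
        simp only [if_pos le_rfl, if_neg (by omega : ¬ m1 + 1 ≤ m1)]
        have : m1 + 1 - (m1 + 1) = 0 := by omega
        rw [this, hc1m, hc20]
        exact hSB _ _ hS
      · simp only [if_neg (by omega : ¬ i ≤ m1), if_neg (by omega : ¬ i + 1 ≤ m1)]
        have h2' : i + 1 - (m1 + 1) = (i - (m1 + 1)) + 1 := by omega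
        rw [h2']
        exact hs2 _ (by omega)
  · refine ⟨m1, by omega, ?_⟩
    simp only [if_pos le_rfl, if_neg (by omega : ¬ m1 + 1 ≤ m1)]
    have : m1 + 1 - (m1 + 1) = 0 := by omega
    rw [this, hc1m, hc20]
    exact hS

private lemma rtg_of_le {B : A → A → Prop} {f : ℕ → A} (hB : ∀ i, B (f i) (f (i + 1)))
    {a b : ℕ} (h : a ≤ b) : ReflTransGen B (f a) (f b) := by
  induction b, h using Nat.le_induction with
  | base => exact ReflTransGen.refl
  | succ n hn ih => exact ih.tail (hB n)

private lemma no_chain_of_acc {r : A → A → Prop} {g : ℕ → A}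
    (hg : ∀ n, r (g (n + 1)) (g n)) (ha : Acc r (g 0)) : False := by
  have : ∀ x, Acc r x → ∀ n, g n = x → False := by
    intro x hx
    induction hx with
    | intro y _ ih =>
      intro n hn
      exact ih (g (n + 1)) (hn ▸ hg n) (n + 1) rfl
  exact this (g 0) ha 0 rfl

private lemma descending_of_not_wf {r : A → A → Prop} (h : ¬ WellFounded r) :
    ∃ g : ℕ → A, ∀ n, r (g (n + 1)) (g n) := by
  have hex : ∃ a, ¬ Acc r a := by
    by_contra hc
    push_neg at hc
    exact h ⟨hc⟩
  obtain ⟨a, ha⟩ := hex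
  have step : ∀ x : {x // ¬ Acc r x}, ∃ y : {y // ¬ Acc r y}, r y.1 x.1 := by
    rintro ⟨x, hx⟩
    by_contra hc
    push_neg at hc
    apply hx
    constructor
    intro y hy
    by_contra hy'
    exact absurd hy (hc ⟨y, hy'⟩)
  choose F hF using step
  refine ⟨fun n => (F^[n] ⟨a, ha⟩).1, fun n => ?_⟩
  show r (F^[n + 1] ⟨a, ha⟩).1 (F^[n] ⟨a, ha⟩).1
  rw [Function.iterate_succ_apply']
  exact hF _

private lemma flatten {B S : A → A → Prop} (hSB : ∀ a b, S a b → B a b)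
    (g : ℕ → A) (hg : ∀ n, Gt B S (g n) (g (n + 1))) :
    ∃ f : ℕ → A, (∀ i, B (f i) (f (i + 1))) ∧
      (∀ n, ∃ i, n ≤ i ∧ S (f i) (f (i + 1))) := by
  choose m c hc0 hcm hstep hSs using fun n => chain_of_gt hSB (hg n)
  have mpos : ∀ n, 1 ≤ m n := fun n => by obtain ⟨i, hi, _⟩ := hSs n; omega
  set t : ℕ → ℕ := fun n => Nat.rec 0 (fun k acc => acc + m k) n with htdef
  have ht0 : t 0 = 0 := rfl
  have htsucc : ∀ n, t (n + 1) = t n + m n := fun n => rfl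
  have htmono : StrictMono t := strictMono_nat_of_lt_succ fun n => by
    have := mpos n; rw [htsucc]; omega
  have htle : ∀ n, n ≤ t n := by
    intro n
    induction n with
    | zero => omega
    | succ k ih => have := mpos k; rw [htsucc]; omega
  have hex : ∀ k, ∃ n, k < t (n + 1) := fun k => ⟨k, by have := htle (k + 1); omega⟩
  set idx : ℕ → ℕ := fun k => Nat.find (hex k) with hidxdef
  have hidx1 : ∀ k, k < t (idx k + 1) := fun k => Nat.find_spec (hex k)
  have hidx2 : ∀ k, t (idx k) ≤ k := by
    intro k
    rcases Nat.eq_zero_or_pos (idx k) with h | h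
    · rw [h, ht0]; exact Nat.zero_le k
    · have hmin : ¬ k < t (idx k - 1 + 1) := Nat.find_min (hex k) (Nat.sub_lt h Nat.one_pos)
      rw [Nat.sub_add_cancel h] at hmin
      omega
  have huni : ∀ n k, t n ≤ k → k < t (n + 1) → idx k = n := by
    intro n k h1 h2
    by_contra hne
    rcases lt_or_gt_of_ne hne with h | h
    · have h3 : t (idx k + 1) ≤ t n := htmono.monotone h
      have := hidx1 k; omega
    · have h3 : t (n + 1) ≤ t (idx k) := htmono.monotone h
      have := hidx2 k; omega
  have fval : ∀ n k, t n ≤ k → k ≤ t (n + 1) →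
      c (idx k) (k - t (idx k)) = c n (k - t n) := by
    intro n k h1 h2
    rcases Nat.eq_or_lt_of_le h2 with heq | hlt
    · have hidxk : idx k = n + 1 := by
        apply huni
        · omega
        · rw [htsucc (n + 1)]; have := mpos (n + 1); omega
      rw [hidxk, heq, Nat.sub_self, hc0 (n + 1), ← hcm n]
      congr 1
      rw [htsucc] at heq ⊢; omega
    · rw [huni n k h1 hlt]
  refine ⟨fun k => c (idx k) (k - t (idx k)), fun k => ?_, fun N => ?_⟩
  · -- B steps
    show B (c (idx k) (k - t (idx k))) (c (idx (k + 1)) (k + 1 - t (idx (k + 1))))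
    have h1 := hidx2 k
    have h2 := hidx1 k
    rw [fval (idx k) k h1 (le_of_lt h2), fval (idx k) (k + 1) (by omega) (by omega)]
    have harith : k + 1 - t (idx k) = (k - t (idx k)) + 1 := by omega
    rw [harith]
    apply hstep
    rw [htsucc] at h2; omega
  · -- S steps
    obtain ⟨i, hi, hSi⟩ := hSs N
    refine ⟨t N + i, le_trans (htle N) (by omega), ?_⟩
    show S (c (idx (t N + i)) (t N + i - t (idx (t N + i))))
      (c (idx (t N + i + 1)) (t N + i + 1 - t (idx (t N + i + 1))))
    have hb1 : t N ≤ t N + i := by omega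
    have hb2 : t N + i ≤ t (N + 1) := by rw [htsucc]; omega
    have hb3 : t N + i + 1 ≤ t (N + 1) := by rw [htsucc]; omega
    rw [fval N (t N + i) hb1 hb2, fval N (t N + i + 1) (by omega) hb3]
    have e1 : t N + i - t N = i := by omega
    have e2 : t N + i + 1 - t N = i + 1 := by omega
    rw [e1, e2]
    exact hSi

/-- `≻ = B*·S·B*` is well-founded if and only if there is no infinite
`B`-sequence containing infinitely many `S`-steps. -/
theorem gt_wellFounded_iff_no_infinite_strict_sequence
    (B S : A → A → Prop) (hSB : ∀ a b, S a b → B a b) :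
    WellFounded (fun a b => Gt B S b a) ↔
      ¬ ∃ f : ℕ → A, (∀ i, B (f i) (f (i + 1))) ∧
        (∀ n, ∃ i, n ≤ i ∧ S (f i) (f (i + 1))) := by
  constructor
  · rintro hwf ⟨f, hB, hS⟩
    choose φ hφ1 hφ2 using hS
    -- indices of strict steps
    let j : ℕ → ℕ := fun n => Nat.rec 0 (fun _ jk => φ jk + 1) n
    have hj : ∀ n, j (n + 1) = φ (j n) + 1 := fun n => rfl
    have hgt : ∀ n, Gt B S (f (j n)) (f (j (n + 1))) := by
      intro n
      refine ⟨f (φ (j n)), f (φ (j n) + 1), rtg_of_le hB (hφ1 (j n)), hφ2 (j n), ?_⟩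
      rw [hj n]
    exact no_chain_of_acc (r := fun a b => Gt B S b a) (g := fun n => f (j n))
      (fun n => hgt n) (hwf.apply _)
  · intro hno
    by_contra hwf
    obtain ⟨g, hg⟩ := descending_of_not_wf hwf
    exact hno (flatten hSB g hg)
end

section
/- Reduction triple criterion for absence of strong chains: suppose (>, ≳, ≥) is a reduction triple (i.e. > is well-founded; ≳ is a quasi-order with > ∘ ≳ ⊆ >; ≥ is a monotonic quasi-order with ≥ ⊆ ≳) such that every instance of a 'strong' pair is oriented by >, every instance of a 'weak' pair by ≳, and every rule instance by ≥. Then there is no infinite sequence s₀, t₀, s₁, t₁, … with sᵢ a root-instance-step (strong pair) to tᵢ, and tᵢ (→_R ∪ weak-root-step)* s_{i+1} for all i. -/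
/-- A root step with a pair from `P`: `s = ℓγ` and `t = rγ`. -/
def RootStep {Sig V : Type*} (P : Set (Tm Sig V × Tm Sig V))
    (s t : Tm Sig V) : Prop :=
  ∃ (l r : Tm Sig V) (γ : V → Tm Sig V),
    (l, r) ∈ P ∧ s = Tm.subst γ l ∧ t = Tm.subst γ r

/-- Reduction triple criterion for the absence of strong chains: if the
reduction triple `(>, ≳, ≥)` orients all instances of strong pairs with `>`,
all instances of weak pairs with `≳`, and all rule instances with the
monotonic `≥`, then there is no infinite strong chain
`sᵢ ⇒_strong tᵢ (→_R ∪ ⇒_weak)* s_{i+1}`. -/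
theorem reduction_triple_no_strong_chain {Sig V : Type*}
    (R Pstrong Pweak : Set (Tm Sig V × Tm Sig V))
    (gt ges ge : Tm Sig V → Tm Sig V → Prop)
    (hwf : WellFounded (fun a b => gt b a))
    (hges_refl : ∀ a, ges a a)
    (hges_trans : ∀ a b c, ges a b → ges b c → ges a c)
    (hcompat : ∀ a b c, gt a b → ges b c → gt a c)
    (hge_refl : ∀ a, ge a a)
    (hge_trans : ∀ a b c, ge a b → ge b c → ge a c)
    (hge_mono : ∀ (C : Ctx Sig V) a b, ge a b → ge (C.fill a) (C.fill b))
    (hge_sub : ∀ a b, ge a b → ges a b)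
    (hstrong : ∀ p ∈ Pstrong, ∀ γ : V → Tm Sig V,
      gt (Tm.subst γ p.1) (Tm.subst γ p.2))
    (hweak : ∀ p ∈ Pweak, ∀ γ : V → Tm Sig V,
      ges (Tm.subst γ p.1) (Tm.subst γ p.2))
    (hrule : ∀ p ∈ R, ∀ γ : V → Tm Sig V,
      ge (Tm.subst γ p.1) (Tm.subst γ p.2)) :
    ¬ ∃ (s t : ℕ → Tm Sig V),
        (∀ i, RootStep Pstrong (s i) (t i)) ∧
        (∀ i, Relation.ReflTransGen
          (fun a b => Rewrites R a b ∨ RootStep Pweak a b) (t i) (s (i + 1))) := by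
  rintro ⟨s, t, hst, hts⟩
  have hstep : ∀ a b, (Rewrites R a b ∨ RootStep Pweak a b) → ges a b := by
    rintro a b (⟨C, l, r, γ, hR, ha, hb⟩ | ⟨l, r, γ, hP, ha, hb⟩)
    · subst ha; subst hb
      exact hge_sub _ _ (hge_mono C _ _ (hrule (l, r) hR γ))
    · subst ha; subst hb
      exact hweak (l, r) hP γ
  have htc : ∀ a b, Relation.ReflTransGen
      (fun a b => Rewrites R a b ∨ RootStep Pweak a b) a b → ges a b := by
    intro a b h
    induction h with
    | refl => exact hges_refl _
    | tail _ h ih => exact hges_trans _ _ _ ih (hstep _ _ h)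
  have hges : ∀ i, ges (t i) (s (i + 1)) := fun i => htc _ _ (hts i)
  have hgt : ∀ i, gt (s i) (s (i + 1)) := by
    intro i
    obtain ⟨l, r, γ, hP, ha, hb⟩ := hst i
    exact hcompat _ _ _ (ha ▸ hb ▸ hstrong (l, r) hP γ) (hges i)
  have : ∀ a, Acc (fun a b => gt b a) a → ∀ n, s n = a → False := by
    intro a ha
    induction ha with
    | intro x _ ih =>
      intro n hn
      exact ih (s (n + 1)) (hn ▸ hgt n) (n + 1) rfl
  exact this (s 0) (hwf.apply _) 0 rfl
end

section
/- If two ground terms headed by distinct function symbols, both applied to fewer arguments than the symbols' arities, have a common reduct, we reach a contradiction: formally, in a rewrite system where every rule for a symbol f has exactly ar(f) arguments on its left-hand side, if s = f s₁⋯sₙ with n < ar(f) and t = g t₁⋯tₘ with m < ar(g) and f ≠ g, then s and t have no common →_R*-reduct; in particular s ↔*_R t fails in any ground confluent system. -/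
/-- The head symbol of a term (leftmost symbol of the spine), if it is a
function symbol. -/
def Tm.headSym {Sig V : Type*} : Tm Sig V → Option Sig
  | .sym f => some f
  | .var _ => none
  | .app s _ => Tm.headSym s

/-- The number of arguments the head of a term is applied to. -/
def Tm.nargs {Sig V : Type*} : Tm Sig V → ℕ
  | .app s _ => Tm.nargs s + 1
  | _ => 0

lemma subst_headSym {Sig V : Type*} (γ : V → Tm Sig V) (l : Tm Sig V) (h : Sig)
    (hl : Tm.headSym l = some h) : Tm.headSym (Tm.subst γ l) = some h := by
  induction l with
  | sym f => exact hl
  | var x => simp [Tm.headSym] at hl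
  | app a b ih ih2 => exact ih hl

lemma subst_nargs {Sig V : Type*} (γ : V → Tm Sig V) (l : Tm Sig V) (h : Sig)
    (hl : Tm.headSym l = some h) : Tm.nargs (Tm.subst γ l) = Tm.nargs l := by
  induction l with
  | sym f => rfl
  | var x => simp [Tm.headSym] at hl
  | app a b ih ih2 => simp [Tm.subst, Tm.nargs, ih hl]

lemma step_preserve {Sig V : Type*}
    (R : Set (Tm Sig V × Tm Sig V)) (ar : Sig → ℕ)
    (hR : ∀ p ∈ R, ∃ f : Sig, Tm.headSym p.1 = some f ∧ Tm.nargs p.1 = ar f)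
    (f : Sig) {s t : Tm Sig V}
    (hst : Rewrites R s t)
    (hs : Tm.headSym s = some f) (hn : Tm.nargs s < ar f) :
    Tm.headSym t = some f ∧ Tm.nargs t = Tm.nargs s := by
  obtain ⟨C, l, r, γ, hlr, rfl, rfl⟩ := hst
  induction C with
  | hole =>
    obtain ⟨h, hh, hna⟩ := hR _ hlr
    simp only [Ctx.fill] at hs hn ⊢
    rw [subst_headSym γ l h hh] at hs
    rw [subst_nargs γ l h hh, hna] at hn
    cases hs
    exact absurd hn (lt_irrefl _)
  | appL C a ih =>
    simp only [Ctx.fill, Tm.headSym, Tm.nargs] at hs hn ⊢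
    obtain ⟨h1, h2⟩ := ih hs (by omega)
    exact ⟨h1, by omega⟩
  | appR a C ih =>
    simp only [Ctx.fill, Tm.headSym, Tm.nargs] at hs hn ⊢
    exact ⟨hs, trivial⟩

/-- In a rewrite system where every rule for a symbol `f` has exactly `ar f`
arguments on its left-hand side, reducts of a partially applied term keep
their head symbol and argument count; consequently two terms with distinct
(partially applied) head symbols have no common `→_R*`-reduct. -/
theorem partial_application_heads_not_joinable {Sig V : Type*}
    (R : Set (Tm Sig V × Tm Sig V)) (ar : Sig → ℕ)
    (hR : ∀ p ∈ R, ∃ f : Sig, Tm.headSym p.1 = some f ∧ Tm.nargs p.1 = ar f)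
    (f g : Sig) (s t : Tm Sig V) (n m : ℕ)
    (hsf : Tm.headSym s = some f) (hsn : Tm.nargs s = n) (hn : n < ar f)
    (htg : Tm.headSym t = some g) (htm : Tm.nargs t = m) (hm : m < ar g)
    (hfg : f ≠ g) :
    (∀ u, Relation.ReflTransGen (Rewrites R) s u →
      Tm.headSym u = some f ∧ Tm.nargs u = n) ∧
    ¬ ∃ w, Relation.ReflTransGen (Rewrites R) s w ∧
           Relation.ReflTransGen (Rewrites R) t w := by
  subst hsn htm
  have key : ∀ u, Relation.ReflTransGen (Rewrites R) s u →
      Tm.headSym u = some f ∧ Tm.nargs u = Tm.nargs s := by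
    intro u hu
    induction hu with
    | refl => exact ⟨hsf, rfl⟩
    | tail _ hstep ih =>
      obtain ⟨h1, h2⟩ := ih
      obtain ⟨h3, h4⟩ := step_preserve R ar hR f hstep h1 (h2 ▸ hn)
      exact ⟨h3, h4.trans h2⟩
  have keyt : ∀ u, Relation.ReflTransGen (Rewrites R) t u →
      Tm.headSym u = some g ∧ Tm.nargs u = Tm.nargs t := by
    intro u hu
    induction hu with
    | refl => exact ⟨htg, rfl⟩
    | tail _ hstep ih =>
      obtain ⟨h1, h2⟩ := ih
      obtain ⟨h3, h4⟩ := step_preserve R ar hR g hstep h1 (h2 ▸ hm)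
      exact ⟨h3, h4.trans h2⟩
  refine ⟨key, ?_⟩
  rintro ⟨w, hw1, hw2⟩
  have := (key w hw1).1
  have := (keyt w hw2).1
  exact hfg (by simp_all)
end
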